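/- arXiv:2311.10546 — 4 statements merged into one kernel-verified Lean document; each statement's English description precedes it below -/
import Mathlib

section
/- Let n ≥ 1, let b_{ij} = b_{ji} > 0 for i ≠ j be symmetric friction coefficients, let ρ_1,…,ρ_n > 0, θ > 0, and let d_1,…,d_n ∈ ℝ³ satisfy Σ_{i=1}^n d_i = 0. Then there exists a unique n-tuple (u_1,…,u_n) ∈ (ℝ³)^n such that −θ Σ_{j≠i} b_{ij} ρ_i ρ_j (u_i − u_j) = d_i for every i ∈ {1,…,n} and Σ_{i=1}^n ρ_i u_i = 0. -/
/-!
Unique solvability of the Maxwell–Stefan system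
`-θ ∑_{j≠i} b_{ij} ρ_i ρ_j (u_i - u_j) = d_i`, subject to the constraint
`∑_i ρ_i u_i = 0`, for data `d_i` with `∑_i d_i = 0`.
-/

open RealInnerProductSpace

private theorem ms_aux (n : ℕ) (hn : 1 ≤ n) (c : Fin n → Fin n → ℝ)
    (hcsymm : ∀ i j, c i j = c j i) (hcpos : ∀ i j, i ≠ j → 0 < c i j)
    (ρ : Fin n → ℝ) (hρ : ∀ i, 0 < ρ i) (θ : ℝ) (hθ : 0 < θ)
    (d : Fin n → EuclideanSpace ℝ (Fin 3)) (hd : ∑ i, d i = 0) :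
    ∃! u : Fin n → EuclideanSpace ℝ (Fin 3),
      (∀ i, -(θ • ∑ j ∈ Finset.univ.erase i, c i j • (u i - u j)) = d i)
        ∧ ∑ i, ρ i • u i = 0 := by
  classical
  haveI : NeZero n := ⟨by omega⟩
  have hρsum : 0 < ∑ i, ρ i := Finset.sum_pos (fun i _ => hρ i) ⟨0, Finset.mem_univ 0⟩
  -- erase-sums equal full sums (diagonal terms vanish)
  have herase : ∀ (u : Fin n → EuclideanSpace ℝ (Fin 3)) (i : Fin n),
      ∑ j ∈ Finset.univ.erase i, c i j • (u i - u j) = ∑ j, c i j • (u i - u j) := by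
    intro u i
    exact Finset.sum_erase _ (by simp)
  -- the perturbed operator
  let B : (Fin n → EuclideanSpace ℝ (Fin 3)) →ₗ[ℝ] (Fin n → EuclideanSpace ℝ (Fin 3)) :=
  { toFun := fun u i => θ • ∑ j, c i j • (u i - u j) + ρ i • ∑ j, ρ j • u j
    map_add' := by
      intro u v; funext i
      simp only [Pi.add_apply, add_sub_add_comm, smul_add, Finset.sum_add_distrib]
      abel
    map_smul' := by
      intro a u; funext i
      simp only [Pi.smul_apply, RingHom.id_apply, smul_add]
      congr 1
      · rw [smul_comm a θ]
        congr 1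
        rw [Finset.smul_sum]
        exact Finset.sum_congr rfl fun j _ => by rw [← smul_sub, smul_comm]
      · rw [smul_comm a (ρ i)]
        congr 1
        rw [Finset.smul_sum]
        exact Finset.sum_congr rfl fun j _ => (smul_comm a (ρ j) (u j)).symm }
  have hB : ∀ u i, B u i = θ • ∑ j, c i j • (u i - u j) + ρ i • ∑ j, ρ j • u j :=
    fun u i => rfl
  -- antisymmetry: total double sum vanishes
  have hanti : ∀ u : Fin n → EuclideanSpace ℝ (Fin 3),
      ∑ i, ∑ j, c i j • (u i - u j) = 0 := by
    intro u
    have h2 : (∑ i, ∑ j, c i j • (u i - u j)) + (∑ i, ∑ j, c i j • (u i - u j)) = 0 := by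
      nth_rewrite 2 [Finset.sum_comm]
      rw [← Finset.sum_add_distrib]
      refine Finset.sum_eq_zero fun i _ => ?_
      rw [← Finset.sum_add_distrib]
      refine Finset.sum_eq_zero fun j _ => ?_
      rw [hcsymm j i, ← neg_sub (u i) (u j), smul_neg, add_neg_cancel]
    have h3 : (2 : ℝ) • (∑ i, ∑ j, c i j • (u i - u j)) = 0 := by
      rw [two_smul]; exact h2
    rcases smul_eq_zero.mp h3 with h | h
    · norm_num at h
    · exact h
  -- injectivity of B
  have hBinj : Function.Injective B := by
    refine (injective_iff_map_eq_zero B).mpr ?_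
    intro u hu
    set s : EuclideanSpace ℝ (Fin 3) := ∑ j, ρ j • u j with hs
    have hT : ∑ i, ⟪B u i, u i⟫ = 0 := by
      have : ∀ i, B u i = 0 := fun i => congrFun hu i
      simp [this]
    have hexpand : ∀ i, ⟪B u i, u i⟫
        = θ * ∑ j, c i j * ⟪u i - u j, u i⟫ + ρ i * ⟪s, u i⟫ := by
      intro i
      rw [hB, inner_add_left, real_inner_smul_left, real_inner_smul_left, sum_inner]
      congr 1
      congr 1
      exact Finset.sum_congr rfl fun j _ => by rw [real_inner_smul_left]
    have hsum2 : ∑ i, ρ i * ⟪s, u i⟫ = ‖s‖ ^ 2 := by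
      rw [← real_inner_self_eq_norm_sq]
      nth_rewrite 2 [hs]
      rw [inner_sum]
      exact Finset.sum_congr rfl fun i _ => by rw [real_inner_smul_right]
    set S : ℝ := ∑ i, ∑ j, c i j * ⟪u i - u j, u i⟫ with hSdef
    have hT2 : θ * S + ‖s‖ ^ 2 = 0 := by
      rw [← hT]
      rw [hSdef, Finset.mul_sum, ← hsum2, ← Finset.sum_add_distrib]
      exact Finset.sum_congr rfl fun i _ => (hexpand i).symm
    have hswap : S = ∑ i, ∑ j, c i j * (- ⟪u i - u j, u j⟫) := by
      rw [hSdef, Finset.sum_comm]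
      refine Finset.sum_congr rfl fun j _ => Finset.sum_congr rfl fun i _ => ?_
      rw [hcsymm i j, ← neg_sub (u j) (u i), inner_neg_left]
    have hdouble : S * 2 = ∑ i, ∑ j, c i j * ‖u i - u j‖ ^ 2 := by
      rw [mul_two]
      nth_rewrite 2 [hswap]
      rw [← Finset.sum_add_distrib]
      refine Finset.sum_congr rfl fun i _ => ?_
      rw [← Finset.sum_add_distrib]
      refine Finset.sum_congr rfl fun j _ => ?_
      rw [← mul_add, ← sub_eq_add_neg, ← inner_sub_right, real_inner_self_eq_norm_sq]
    have hterm_nonneg : ∀ i ∈ Finset.univ, ∀ j ∈ (Finset.univ : Finset (Fin n)),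
        0 ≤ c i j * ‖u i - u j‖ ^ 2 := by
      intro i _ j _
      by_cases h : i = j
      · simp [h]
      · exact mul_nonneg (hcpos i j h).le (sq_nonneg _)
    have hSS_nonneg : 0 ≤ ∑ i, ∑ j, c i j * ‖u i - u j‖ ^ 2 :=
      Finset.sum_nonneg fun i hi => Finset.sum_nonneg (hterm_nonneg i hi)
    have hS_nonneg : 0 ≤ S := by linarith [hSS_nonneg, hdouble]
    have hθS : 0 ≤ θ * S := mul_nonneg hθ.le hS_nonneg
    have hns0 : ‖s‖ ^ 2 = 0 := le_antisymm (by linarith) (sq_nonneg _)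
    have hs0 : s = 0 := norm_eq_zero.mp (sq_eq_zero_iff.mp hns0)
    have hS0 : S = 0 := by
      have h : θ * S = 0 := by linarith
      rcases mul_eq_zero.mp h with h | h
      · exact absurd h (ne_of_gt hθ)
      · exact h
    have hSS0 : ∑ i, ∑ j, c i j * ‖u i - u j‖ ^ 2 = 0 := by rw [← hdouble, hS0]; ring
    have hall : ∀ i j : Fin n, u i = u j := by
      have h1 := (Finset.sum_eq_zero_iff_of_nonneg
        (fun i hi => Finset.sum_nonneg (hterm_nonneg i hi))).mp hSS0
      intro i j
      by_cases h : i = j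
      · rw [h]
      · have h2 := (Finset.sum_eq_zero_iff_of_nonneg
          (hterm_nonneg i (Finset.mem_univ i))).mp (h1 i (Finset.mem_univ i)) j
          (Finset.mem_univ j)
        have h3 : ‖u i - u j‖ ^ 2 = 0 := by
          rcases mul_eq_zero.mp h2 with h4 | h4
          · exact absurd h4 (ne_of_gt (hcpos i j h))
          · exact h4
        have : u i - u j = 0 := by
          have := sq_eq_zero_iff.mp h3
          exact norm_eq_zero.mp this
        exact sub_eq_zero.mp this
    have hu0 : u 0 = 0 := by
      have : s = (∑ j, ρ j) • u 0 := by
        rw [hs, Finset.sum_smul]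
        exact Finset.sum_congr rfl fun j _ => by rw [hall j 0]
      rw [hs0] at this
      rcases smul_eq_zero.mp this.symm with h | h
      · exact absurd h (ne_of_gt hρsum)
      · exact h
    funext i
    rw [Pi.zero_apply, hall i 0, hu0]
  -- surjectivity
  have hBsurj : Function.Surjective B := LinearMap.injective_iff_surjective.mp hBinj
  obtain ⟨u, hu⟩ := hBsurj (fun i => -d i)
  have hui : ∀ i, B u i = -d i := fun i => congrFun hu i
  set s : EuclideanSpace ℝ (Fin 3) := ∑ j, ρ j • u j with hs
  have hsumB : ∑ i, B u i = (∑ i, ρ i) • s := by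
    calc ∑ i, B u i
        = ∑ i, (θ • ∑ j, c i j • (u i - u j) + ρ i • s) :=
          Finset.sum_congr rfl fun i _ => hB u i
      _ = θ • (∑ i, ∑ j, c i j • (u i - u j)) + ∑ i, ρ i • s := by
          rw [Finset.sum_add_distrib, Finset.smul_sum]
      _ = (∑ i, ρ i) • s := by rw [hanti u, smul_zero, zero_add, Finset.sum_smul]
  have hsumB0 : ∑ i, B u i = 0 := by
    calc ∑ i, B u i = ∑ i, -d i := Finset.sum_congr rfl fun i _ => hui i
      _ = -∑ i, d i := by rw [Finset.sum_neg_distrib]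
      _ = 0 := by rw [hd, neg_zero]
  have hs0 : s = 0 := by
    have h := hsumB.symm.trans hsumB0
    rcases smul_eq_zero.mp h with h | h
    · exact absurd h (ne_of_gt hρsum)
    · exact h
  have hueq : ∀ i, -(θ • ∑ j ∈ Finset.univ.erase i, c i j • (u i - u j)) = d i := by
    intro i
    have h := hui i
    rw [hB, ← hs, hs0, smul_zero, add_zero] at h
    rw [herase, h, neg_neg]
  refine ⟨u, ⟨hueq, hs0⟩, ?_⟩
  intro v hv
  have hveq : B v = B u := by
    funext i
    rw [hB, hB, ← hs, hs0, smul_zero, ← hv.2, ← herase, ← herase]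
    have h1 : θ • ∑ j ∈ Finset.univ.erase i, c i j • (v i - v j) = -d i := by
      have := hv.1 i
      rw [← this, neg_neg]
    have h2 : θ • ∑ j ∈ Finset.univ.erase i, c i j • (u i - u j) = -d i := by
      have := hueq i
      rw [← this, neg_neg]
    rw [h1, h2, hv.2, smul_zero]
  exact hBinj hveq

theorem maxwell_stefan_unique_solvability
    (n : ℕ) (hn : 1 ≤ n)
    (b : Fin n → Fin n → ℝ)
    (hbsymm : ∀ i j, b i j = b j i)
    (hbpos : ∀ i j, i ≠ j → 0 < b i j)
    (ρ : Fin n → ℝ) (hρ : ∀ i, 0 < ρ i)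
    (θ : ℝ) (hθ : 0 < θ)
    (d : Fin n → EuclideanSpace ℝ (Fin 3))
    (hd : ∑ i, d i = 0) :
    ∃! u : Fin n → EuclideanSpace ℝ (Fin 3),
      (∀ i, -(θ • ∑ j ∈ Finset.univ.erase i, (b i j * ρ i * ρ j) • (u i - u j)) = d i)
        ∧ ∑ i, ρ i • u i = 0 := by
  exact ms_aux n hn (fun i j => b i j * ρ i * ρ j)
    (fun i j => by rw [hbsymm i j]; ring)
    (fun i j h => by
      have := hbpos i j h
      have h1 := hρ i
      have h2 := hρ j
      positivity)
    ρ hρ θ hθ d hd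
end

section
/- Let γ, M > 0 and for each i ∈ {1,…,n} let f_i = f_i(ρ, θ) be a C³ function on a neighborhood of [0, M] × [γ, M] satisfying the Gibbs stability conditions ∂²f_i/∂ρ² > 0 and ∂²f_i/∂θ² < 0 on [0, M] × [γ, M]. Then there exists a constant C > 0 such that for all (ρ_1,…,ρ_n, θ) and (ρ̄_1,…,ρ̄_n, θ̄) with 0 ≤ ρ_i, ρ̄_i ≤ M, γ ≤ Σ_i ρ_i ≤ M, γ ≤ Σ_i ρ̄_i ≤ M and γ ≤ θ, θ̄ ≤ M, one has Σ_{i=1}^n [ f_i(ρ_i, θ) − f_i(ρ̄_i, θ̄) − ∂_ρ f_i(ρ̄_i, θ̄)(ρ_i − ρ̄_i) − ∂_θ f_i(ρ̄_i, θ̄)(θ − θ̄) ] + ( Σ_{i=1}^n (−∂_θ f_i(ρ_i, θ)) − Σ_{i=1}^n (−∂_θ f_i(ρ̄_i, θ̄)) ) (θ − θ̄) ≥ C ( Σ_{i=1}^n |ρ_i − ρ̄_i|² + |θ − θ̄|² ). -/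
/-!
Quadratic lower bound for the thermodynamic part of the relative entropy:
if the free energy densities `f_i(ρ, θ)` are `C³` near `[0,M] × [γ,M]` and satisfy
the Gibbs stability conditions `∂²f_i/∂ρ² > 0`, `∂²f_i/∂θ² < 0` there, then
`∑_i (f_i)(ω|ω̄) + (ρη - ρ̄η̄)(θ - θ̄) ≥ C (∑_i |ρ_i - ρ̄_i|² + |θ - θ̄|²)`
uniformly over states with `0 ≤ ρ_i, ρ̄_i ≤ M`, `γ ≤ ∑ρ_i, ∑ρ̄_i ≤ M`, `γ ≤ θ, θ̄ ≤ M`;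
here the entropy density is `ρ_iη_i = -∂_θ f_i`.
-/

open Set in
lemma quad_tangent_le' (g g' g'' : ℝ → ℝ) (x y c : ℝ)
    (hg : ∀ t ∈ uIcc x y, HasDerivAt g (g' t) t)
    (hg' : ∀ t ∈ uIcc x y, HasDerivAt g' (g'' t) t)
    (hc : ∀ t ∈ uIcc x y, c ≤ g'' t) :
    g x + g' x * (y - x) + c / 2 * (y - x) ^ 2 ≤ g y := by
  set φ : ℝ → ℝ := fun t => g t - g x - g' x * (t - x) - c / 2 * (t - x) ^ 2 with hφdef
  set ψ : ℝ → ℝ := fun t => g' t - g' x - c * (t - x) with hψdef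
  have hφ : ∀ t ∈ uIcc x y, HasDerivAt φ (ψ t) t := by
    intro t ht
    have h1 : HasDerivAt (fun t => g' x * (t - x)) (g' x) t := by
      simpa using (((hasDerivAt_id t).sub_const x).const_mul (g' x))
    have h2 : HasDerivAt (fun t => c / 2 * (t - x) ^ 2) (c * (t - x)) t := by
      have := (((hasDerivAt_id t).sub_const x).pow 2).const_mul (c / 2)
      refine this.congr_deriv ?_
      norm_num; ring
    have := (((hg t ht).sub_const (g x)).sub h1).sub h2
    exact this
  have hψ : ∀ t ∈ uIcc x y, HasDerivAt ψ (g'' t - c) t := by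
    intro t ht
    have h1 : HasDerivAt (fun t => c * (t - x)) c t := by
      simpa using (((hasDerivAt_id t).sub_const x).const_mul c)
    have := ((hg' t ht).sub_const (g' x)).sub h1
    exact this
  have hφx : φ x = 0 := by simp [hφdef]
  have hψx : ψ x = 0 := by simp [hψdef]
  have key : 0 ≤ φ y := by
    rcases lt_trichotomy x y with hxy | hxy | hxy
    · have huIcc : uIcc x y = Icc x y := uIcc_of_le hxy.le
      have hcont : ContinuousOn φ (Icc x y) := fun t ht =>
        ((hφ t (huIcc ▸ ht)).continuousAt).continuousWithinAt
      obtain ⟨ξ, hξ, hslope⟩ := exists_hasDerivAt_eq_slope φ ψ hxy hcont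
        (fun t ht => hφ t (huIcc ▸ Ioo_subset_Icc_self ht))
      have hsub : Icc x ξ ⊆ Icc x y := Icc_subset_Icc le_rfl hξ.2.le
      have hcont2 : ContinuousOn ψ (Icc x ξ) := fun t ht =>
        ((hψ t (huIcc ▸ hsub ht)).continuousAt).continuousWithinAt
      obtain ⟨ξ₂, hξ₂, hslope2⟩ := exists_hasDerivAt_eq_slope ψ (fun t => g'' t - c) hξ.1 hcont2
        (fun t ht => hψ t (huIcc ▸ hsub (Ioo_subset_Icc_self ht)))
      have hξ₂mem : ξ₂ ∈ uIcc x y := huIcc ▸ hsub (Ioo_subset_Icc_self hξ₂)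
      have h1 : c ≤ g'' ξ₂ := hc ξ₂ hξ₂mem
      rw [hψx] at hslope2
      rw [hφx] at hslope
      have hξx : 0 < ξ - x := by linarith [hξ.1]
      have hyx : 0 < y - x := by linarith
      have hψξ : ψ ξ = (g'' ξ₂ - c) * (ξ - x) := by
        field_simp at hslope2
        linarith [hslope2]
      have hφy : φ y = ψ ξ * (y - x) := by
        field_simp at hslope
        linarith [hslope]
      rw [hφy, hψξ]
      exact mul_nonneg (mul_nonneg (by linarith) hξx.le) hyx.le
    · subst hxy; simp [hφx]
    · have huIcc : uIcc x y = Icc y x := uIcc_of_ge hxy.le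
      have hcont : ContinuousOn φ (Icc y x) := fun t ht =>
        ((hφ t (huIcc ▸ ht)).continuousAt).continuousWithinAt
      obtain ⟨ξ, hξ, hslope⟩ := exists_hasDerivAt_eq_slope φ ψ hxy hcont
        (fun t ht => hφ t (huIcc ▸ Ioo_subset_Icc_self ht))
      have hsub : Icc ξ x ⊆ Icc y x := Icc_subset_Icc hξ.1.le le_rfl
      have hcont2 : ContinuousOn ψ (Icc ξ x) := fun t ht =>
        ((hψ t (huIcc ▸ hsub ht)).continuousAt).continuousWithinAt
      obtain ⟨ξ₂, hξ₂, hslope2⟩ := exists_hasDerivAt_eq_slope ψ (fun t => g'' t - c) hξ.2 hcont2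
        (fun t ht => hψ t (huIcc ▸ hsub (Ioo_subset_Icc_self ht)))
      have hξ₂mem : ξ₂ ∈ uIcc x y := huIcc ▸ hsub (Ioo_subset_Icc_self hξ₂)
      have h1 : c ≤ g'' ξ₂ := hc ξ₂ hξ₂mem
      rw [hψx] at hslope2
      rw [hφx] at hslope
      have hξx : 0 < x - ξ := by linarith [hξ.2]
      have hxy' : 0 < x - y := by linarith
      have hψξ : ψ ξ = -((g'' ξ₂ - c) * (x - ξ)) := by
        field_simp at hslope2
        nlinarith [hslope2]
      have hφy : φ y = -(ψ ξ * (x - y)) := by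
        field_simp at hslope
        nlinarith [hslope]
      rw [hφy, hψξ]
      have : 0 ≤ (g'' ξ₂ - c) * (x - ξ) := mul_nonneg (by linarith) hξx.le
      nlinarith
  simp only [hφdef] at key
  linarith

open Set in
lemma slice_fst {G : ℝ × ℝ → ℝ} {p : ℝ × ℝ} (h : DifferentiableAt ℝ G p) :
    HasDerivAt (fun a => G (a, p.2)) (fderiv ℝ G p (1, 0)) p.1 := by
  have h1 : HasDerivAt (fun a : ℝ => (a, p.2)) ((1 : ℝ), (0 : ℝ)) p.1 :=
    (hasDerivAt_id p.1).prodMk (hasDerivAt_const p.1 p.2)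
  exact h.hasFDerivAt.comp_hasDerivAt p.1 h1

open Set in
lemma slice_snd {G : ℝ × ℝ → ℝ} {p : ℝ × ℝ} (h : DifferentiableAt ℝ G p) :
    HasDerivAt (fun b => G (p.1, b)) (fderiv ℝ G p (0, 1)) p.2 := by
  have h1 : HasDerivAt (fun b : ℝ => (p.1, b)) ((0 : ℝ), (1 : ℝ)) p.2 :=
    (hasDerivAt_const p.2 p.1).prodMk (hasDerivAt_id p.2)
  exact h.hasFDerivAt.comp_hasDerivAt p.2 h1

theorem relative_entropy_quadratic_lower_bound
    (n : ℕ) (hn : 1 ≤ n)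
    (γ M : ℝ) (hγ : 0 < γ) (hγM : γ ≤ M)
    (f : Fin n → ℝ → ℝ → ℝ)
    (U : Set (ℝ × ℝ)) (hUopen : IsOpen U)
    (hUnbhd : Set.Icc (0 : ℝ) M ×ˢ Set.Icc γ M ⊆ U)
    (hf : ∀ i, ContDiffOn ℝ 3 (fun p : ℝ × ℝ => f i p.1 p.2) U)
    (hGibbs : ∀ i, ∀ a ∈ Set.Icc (0 : ℝ) M, ∀ b ∈ Set.Icc γ M,
      0 < deriv (fun a' => deriv (fun a'' => f i a'' b) a') a
      ∧ deriv (fun b' => deriv (fun b'' => f i a b'') b') b < 0) :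
    ∃ C : ℝ, 0 < C ∧
      ∀ (ρ ρ' : Fin n → ℝ) (θ θ' : ℝ),
        (∀ i, ρ i ∈ Set.Icc (0 : ℝ) M) →
        (∀ i, ρ' i ∈ Set.Icc (0 : ℝ) M) →
        (∑ i, ρ i) ∈ Set.Icc γ M →
        (∑ i, ρ' i) ∈ Set.Icc γ M →
        θ ∈ Set.Icc γ M →
        θ' ∈ Set.Icc γ M →
        (∑ i, (f i (ρ i) θ - f i (ρ' i) θ'
              - deriv (fun a => f i a θ') (ρ' i) * (ρ i - ρ' i)
              - deriv (fun b => f i (ρ' i) b) θ' * (θ - θ')))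
          + ((∑ i, -(deriv (fun b => f i (ρ i) b) θ))
              - ∑ i, -(deriv (fun b => f i (ρ' i) b) θ')) * (θ - θ')
        ≥ C * ((∑ i, |ρ i - ρ' i| ^ 2) + |θ - θ'| ^ 2) := by
  classical
  set K : Set (ℝ × ℝ) := Set.Icc (0:ℝ) M ×ˢ Set.Icc γ M with hKdef
  have hKU : K ⊆ U := hUnbhd
  set P1 : Fin n → ℝ × ℝ → ℝ :=
    fun i p => fderiv ℝ (fun q : ℝ × ℝ => f i q.1 q.2) p (1, 0) with hP1def
  set P2 : Fin n → ℝ × ℝ → ℝ :=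
    fun i p => fderiv ℝ (fun q : ℝ × ℝ => f i q.1 q.2) p (0, 1) with hP2def
  set P11 : Fin n → ℝ × ℝ → ℝ := fun i p => fderiv ℝ (P1 i) p (1, 0) with hP11def
  set P22 : Fin n → ℝ × ℝ → ℝ := fun i p => fderiv ℝ (P2 i) p (0, 1) with hP22def
  have hfderiv : ∀ i, ContDiffOn ℝ 2 (fderiv ℝ (fun q : ℝ × ℝ => f i q.1 q.2)) U :=
    fun i => (hf i).fderiv_of_isOpen hUopen (by norm_num)
  have hP1smooth : ∀ i, ContDiffOn ℝ 2 (P1 i) U :=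
    fun i => (hfderiv i).clm_apply contDiffOn_const
  have hP2smooth : ∀ i, ContDiffOn ℝ 2 (P2 i) U :=
    fun i => (hfderiv i).clm_apply contDiffOn_const
  have hP11cont : ∀ i, ContinuousOn (P11 i) U := fun i =>
    (((hP1smooth i).fderiv_of_isOpen (m := 1) hUopen (by norm_num)).clm_apply contDiffOn_const).continuousOn
  have hP22cont : ∀ i, ContinuousOn (P22 i) U := fun i =>
    (((hP2smooth i).fderiv_of_isOpen (m := 1) hUopen (by norm_num)).clm_apply contDiffOn_const).continuousOn
  have hDa : ∀ i, ∀ p ∈ U, HasDerivAt (fun a => f i a p.2) (P1 i p) p.1 := fun i p hp =>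
    slice_fst (((hf i).differentiableOn (by norm_num)).differentiableAt (hUopen.mem_nhds hp))
  have hDb : ∀ i, ∀ p ∈ U, HasDerivAt (fun b => f i p.1 b) (P2 i p) p.2 := fun i p hp =>
    slice_snd (((hf i).differentiableOn (by norm_num)).differentiableAt (hUopen.mem_nhds hp))
  have hD11 : ∀ i, ∀ p ∈ U, HasDerivAt (fun a => P1 i (a, p.2)) (P11 i p) p.1 := fun i p hp =>
    slice_fst (((hP1smooth i).differentiableOn (by norm_num)).differentiableAt (hUopen.mem_nhds hp))
  have hD22 : ∀ i, ∀ p ∈ U, HasDerivAt (fun b => P2 i (p.1, b)) (P22 i p) p.2 := fun i p hp =>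
    slice_snd (((hP2smooth i).differentiableOn (by norm_num)).differentiableAt (hUopen.mem_nhds hp))
  have hGibbs' : ∀ i, ∀ p ∈ K, 0 < P11 i p ∧ P22 i p < 0 := by
    intro i p hp
    obtain ⟨hpa, hpb⟩ := hp
    obtain ⟨h1, h2⟩ := hGibbs i p.1 hpa p.2 hpb
    constructor
    · have hopen : IsOpen {a : ℝ | (a, p.2) ∈ U} :=
        hUopen.preimage (continuous_id.prodMk continuous_const)
      have hev : (fun a' => deriv (fun a'' => f i a'' p.2) a') =ᶠ[nhds p.1]
          (fun a' => P1 i (a', p.2)) := by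
        filter_upwards [hopen.mem_nhds (hKU ⟨hpa, hpb⟩ : (p.1, p.2) ∈ U)] with a ha
        exact (hDa i (a, p.2) ha).deriv
      rw [hev.deriv_eq, (hD11 i p (hKU ⟨hpa, hpb⟩)).deriv] at h1
      exact h1
    · have hopen : IsOpen {b : ℝ | (p.1, b) ∈ U} :=
        hUopen.preimage (continuous_const.prodMk continuous_id)
      have hev : (fun b' => deriv (fun b'' => f i p.1 b'') b') =ᶠ[nhds p.2]
          (fun b' => P2 i (p.1, b')) := by
        filter_upwards [hopen.mem_nhds (hKU ⟨hpa, hpb⟩ : (p.1, p.2) ∈ U)] with b hb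
        exact (hDb i (p.1, b) hb).deriv
      rw [hev.deriv_eq, (hD22 i p (hKU ⟨hpa, hpb⟩)).deriv] at h2
      exact h2
  have hKcomp : IsCompact K := isCompact_Icc.prod isCompact_Icc
  have hKne : K.Nonempty := ⟨(0, γ), ⟨le_refl 0, le_trans hγ.le hγM⟩, le_refl γ, hγM⟩
  have hmins : ∀ i, ∃ c, 0 < c ∧ ∀ p ∈ K, c ≤ P11 i p ∧ c ≤ -(P22 i p) := by
    intro i
    obtain ⟨p₁, hp₁, hmin1⟩ := hKcomp.exists_isMinOn hKne ((hP11cont i).mono hKU)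
    obtain ⟨p₂, hp₂, hmin2⟩ := hKcomp.exists_isMinOn hKne (((hP22cont i).mono hKU).neg)
    refine ⟨min (P11 i p₁) (-(P22 i p₂)), ?_, ?_⟩
    · exact lt_min (hGibbs' i p₁ hp₁).1 (by linarith [(hGibbs' i p₂ hp₂).2])
    · intro p hp
      exact ⟨le_trans (min_le_left _ _) (hmin1 hp), le_trans (min_le_right _ _) (hmin2 hp)⟩
  choose cc hccpos hcc using hmins
  obtain ⟨i0, -, hi0⟩ := Finset.exists_min_image Finset.univ cc ⟨⟨0, hn⟩, Finset.mem_univ _⟩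
  refine ⟨cc i0 / 2, div_pos (hccpos i0) two_pos, ?_⟩
  intro ρ ρ' θ θ' hρ hρ' _ _ hθ hθ'
  have hmem : ∀ i, ∀ t ∈ Set.uIcc (ρ' i) (ρ i), (t, θ') ∈ K :=
    fun i t ht => ⟨Set.uIcc_subset_Icc (hρ' i) (hρ i) ht, hθ'⟩
  have hmem2 : ∀ i, ∀ t ∈ Set.uIcc θ θ', ((ρ i), t) ∈ K :=
    fun i t ht => ⟨hρ i, Set.uIcc_subset_Icc hθ hθ' ht⟩
  have key : ∀ i, cc i0 / 2 * (|ρ i - ρ' i| ^ 2 + |θ - θ'| ^ 2) ≤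
      (f i (ρ i) θ - f i (ρ' i) θ'
        - deriv (fun a => f i a θ') (ρ' i) * (ρ i - ρ' i)
        - deriv (fun b => f i (ρ' i) b) θ' * (θ - θ'))
      + (-(deriv (fun b => f i (ρ i) b) θ) - -(deriv (fun b => f i (ρ' i) b) θ')) * (θ - θ') := by
    intro i
    have hc0 : cc i0 ≤ cc i := hi0 i (Finset.mem_univ i)
    have e1 : deriv (fun a => f i a θ') (ρ' i) = P1 i (ρ' i, θ') :=
      (hDa i (ρ' i, θ') (hKU ⟨hρ' i, hθ'⟩)).deriv
    have e2 : deriv (fun b => f i (ρ' i) b) θ' = P2 i (ρ' i, θ') :=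
      (hDb i (ρ' i, θ') (hKU ⟨hρ' i, hθ'⟩)).deriv
    have e3 : deriv (fun b => f i (ρ i) b) θ = P2 i (ρ i, θ) :=
      (hDb i (ρ i, θ) (hKU ⟨hρ i, hθ⟩)).deriv
    rw [e1, e2, e3]
    have hB := quad_tangent_le' (fun a => f i a θ') (fun a => P1 i (a, θ'))
        (fun a => P11 i (a, θ')) (ρ' i) (ρ i) (cc i0)
        (fun t ht => hDa i (t, θ') (hKU (hmem i t ht)))
        (fun t ht => hD11 i (t, θ') (hKU (hmem i t ht)))
        (fun t ht => le_trans hc0 (hcc i (t, θ') (hmem i t ht)).1)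
    have hA := quad_tangent_le' (fun b => -(f i (ρ i) b)) (fun b => -(P2 i (ρ i, b)))
        (fun b => -(P22 i (ρ i, b))) θ θ' (cc i0)
        (fun t ht => (hDb i (ρ i, t) (hKU (hmem2 i t ht))).neg)
        (fun t ht => (hD22 i (ρ i, t) (hKU (hmem2 i t ht))).neg)
        (fun t ht => by
          have := (hcc i (ρ i, t) (hmem2 i t ht)).2
          show cc i0 ≤ -P22 i (ρ i, t)
          linarith)
    beta_reduce at hB hA
    have hA' : cc i0 / 2 * (θ - θ') ^ 2 ≤
        f i (ρ i) θ - f i (ρ i) θ' - P2 i (ρ i, θ) * (θ - θ') := by nlinarith [hA]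
    rw [sq_abs, sq_abs]
    linarith [hB, hA']
  have hsum := Finset.sum_le_sum (fun i (_ : i ∈ Finset.univ) => key i)
  have hR : (∑ i, (f i (ρ i) θ - f i (ρ' i) θ'
        - deriv (fun a => f i a θ') (ρ' i) * (ρ i - ρ' i)
        - deriv (fun b => f i (ρ' i) b) θ' * (θ - θ')))
      + ((∑ i, -(deriv (fun b => f i (ρ i) b) θ))
          - ∑ i, -(deriv (fun b => f i (ρ' i) b) θ')) * (θ - θ')
      = ∑ i, ((f i (ρ i) θ - f i (ρ' i) θ'
        - deriv (fun a => f i a θ') (ρ' i) * (ρ i - ρ' i)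
        - deriv (fun b => f i (ρ' i) b) θ' * (θ - θ'))
      + (-(deriv (fun b => f i (ρ i) b) θ) - -(deriv (fun b => f i (ρ' i) b) θ')) * (θ - θ')) := by
    rw [Finset.sum_add_distrib, ← Finset.sum_sub_distrib, ← Finset.sum_mul]
  rw [ge_iff_le, hR]
  refine le_trans ?_ hsum
  have hL : ∑ i, (cc i0 / 2 * (|ρ i - ρ' i| ^ 2 + |θ - θ'| ^ 2)) =
      cc i0 / 2 * (∑ i, |ρ i - ρ' i| ^ 2) + (n : ℝ) * (cc i0 / 2 * |θ - θ'| ^ 2) := by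
    simp [mul_add, Finset.sum_add_distrib, ← Finset.mul_sum, Finset.sum_const,
      Finset.card_univ, nsmul_eq_mul]
  rw [hL]
  have hn' : (1 : ℝ) ≤ (n : ℝ) := by exact_mod_cast hn
  have h1 : (0 : ℝ) ≤ |θ - θ'| ^ 2 := by positivity
  have h2 : (0 : ℝ) < cc i0 := hccpos i0
  have h3 : 1 * (cc i0 / 2 * |θ - θ'| ^ 2) ≤ (n : ℝ) * (cc i0 / 2 * |θ - θ'| ^ 2) :=
    mul_le_mul_of_nonneg_right hn' (mul_nonneg (by linarith) h1)
  nlinarith [h3]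
end

section
/- Let f_1,…,f_n be C¹ functions of (ρ, θ) on an open domain, and define for each i: the chemical potential μ_i = ∂_ρ f_i, the partial entropy density s_i(ρ, θ) = −∂_θ f_i(ρ, θ), and the internal energy density e_i(ρ, θ) = f_i(ρ, θ) − θ ∂_θ f_i(ρ, θ). Let ρ_1,…,ρ_n, ρ̄_1,…,ρ̄_n ≥ 0, θ, θ̄ > 0 and v_1,…,v_n, v̄_1,…,v̄_n ∈ ℝ³ be such that all points lie in the domain. Then: −Σ_{i=1}^n (ρ_i − ρ̄_i)(μ_i(ρ̄_i, θ̄) − ½|v̄_i|²) − Σ_{i=1}^n (ρ_i v_i − ρ̄_i v̄_i)·v̄_i + ( Σ_{i=1}^n e_i(ρ_i, θ) + ½ Σ_{i=1}^n ρ_i |v_i|² ) − ( Σ_{i=1}^n e_i(ρ̄_i, θ̄) + ½ Σ_{i=1}^n ρ̄_i |v̄_i|² ) − ( Σ_{i=1}^n s_i(ρ_i, θ) − Σ_{i=1}^n s_i(ρ̄_i, θ̄) ) θ̄ = ½ Σ_{i=1}^n ρ_i |v_i − v̄_i|² + Σ_{i=1}^n [ f_i(ρ_i, θ) − f_i(ρ̄_i,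 θ̄) − ∂_ρ f_i(ρ̄_i, θ̄)(ρ_i − ρ̄_i) − ∂_θ f_i(ρ̄_i, θ̄)(θ − θ̄) ] + ( Σ_{i=1}^n s_i(ρ_i, θ) − Σ_{i=1}^n s_i(ρ̄_i, θ̄) )(θ − θ̄). -/
open scoped RealInnerProductSpace

/-!
Algebraic identity behind the relative entropy computation: testing the mass,
momentum, energy and entropy balances with `μ̄_i - ½|v̄_i|²`, `v̄_i`, `-1` and `θ̄`
respectively produces exactly the relative entropy density
`½ ∑ ρ_i|v_i - v̄_i|² + ∑ (ρ_iψ_i)(ω|ω̄) + (ρη - ρ̄η̄)(θ - θ̄)`.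
Here `f_i` are the free energy densities, `μ_i = ∂_ρ f_i`, `s_i = -∂_θ f_i`
(entropy densities) and `e_i = f_i - θ ∂_θ f_i` (internal energy densities).
-/

theorem relative_entropy_algebraic_identity
    (n : ℕ) (hn : 1 ≤ n)
    (f : Fin n → ℝ → ℝ → ℝ)
    (hfC1 : ∀ i, ContDiff ℝ 1 (fun q : ℝ × ℝ => f i q.1 q.2))
    (μ s e : Fin n → ℝ → ℝ → ℝ)
    (hμ : ∀ i a b, μ i a b = deriv (fun a' => f i a' b) a)
    (hs : ∀ i a b, s i a b = -(deriv (fun b' => f i a b') b))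
    (he : ∀ i a b, e i a b = f i a b - b * deriv (fun b' => f i a b') b)
    (ρ ρ' : Fin n → ℝ) (hρ : ∀ i, 0 ≤ ρ i) (hρ' : ∀ i, 0 ≤ ρ' i)
    (θ θ' : ℝ) (hθ : 0 < θ) (hθ' : 0 < θ')
    (v v' : Fin n → EuclideanSpace ℝ (Fin 3)) :
    -(∑ i, (ρ i - ρ' i) * (μ i (ρ' i) θ' - (1 / 2) * ‖v' i‖ ^ 2))
      - (∑ i, ⟪ρ i • v i - ρ' i • v' i, v' i⟫)
      + ((∑ i, e i (ρ i) θ) + (1 / 2) * ∑ i, ρ i * ‖v i‖ ^ 2)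
      - ((∑ i, e i (ρ' i) θ') + (1 / 2) * ∑ i, ρ' i * ‖v' i‖ ^ 2)
      - ((∑ i, s i (ρ i) θ) - ∑ i, s i (ρ' i) θ') * θ'
    = (1 / 2) * ∑ i, ρ i * ‖v i - v' i‖ ^ 2
      + (∑ i, (f i (ρ i) θ - f i (ρ' i) θ'
            - deriv (fun a => f i a θ') (ρ' i) * (ρ i - ρ' i)
            - deriv (fun b => f i (ρ' i) b) θ' * (θ - θ')))
      + ((∑ i, s i (ρ i) θ) - ∑ i, s i (ρ' i) θ') * (θ - θ') := by

  have key : ∀ i : Fin n,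
      -((ρ i - ρ' i) * (μ i (ρ' i) θ' - (1 / 2) * ‖v' i‖ ^ 2))
        - ⟪ρ i • v i - ρ' i • v' i, v' i⟫
        + (e i (ρ i) θ + (1 / 2) * (ρ i * ‖v i‖ ^ 2))
        - (e i (ρ' i) θ' + (1 / 2) * (ρ' i * ‖v' i‖ ^ 2))
        - (s i (ρ i) θ - s i (ρ' i) θ') * θ'
      = (1 / 2) * (ρ i * ‖v i - v' i‖ ^ 2)
        + (f i (ρ i) θ - f i (ρ' i) θ'
            - deriv (fun a => f i a θ') (ρ' i) * (ρ i - ρ' i)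
            - deriv (fun b => f i (ρ' i) b) θ' * (θ - θ'))
        + (s i (ρ i) θ - s i (ρ' i) θ') * (θ - θ') := by
    intro i
    have h1 : ⟪ρ i • v i - ρ' i • v' i, v' i⟫
        = ρ i * ⟪v i, v' i⟫ - ρ' i * ⟪v' i, v' i⟫ := by
      rw [inner_sub_left, real_inner_smul_left, real_inner_smul_left]
    have h2 : ‖v i - v' i‖ ^ 2 = ‖v i‖ ^ 2 - 2 * ⟪v i, v' i⟫ + ‖v' i‖ ^ 2 :=
      norm_sub_sq_real _ _
    have h3 : ⟪v' i, v' i⟫ = ‖v' i‖ ^ 2 := real_inner_self_eq_norm_sq _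
    rw [hμ, hs, hs, he, he, h1, h2, h3]
    ring
  calc
    _ = ∑ i, (-((ρ i - ρ' i) * (μ i (ρ' i) θ' - (1 / 2) * ‖v' i‖ ^ 2))
          - ⟪ρ i • v i - ρ' i • v' i, v' i⟫
          + (e i (ρ i) θ + (1 / 2) * (ρ i * ‖v i‖ ^ 2))
          - (e i (ρ' i) θ' + (1 / 2) * (ρ' i * ‖v' i‖ ^ 2))
          - (s i (ρ i) θ - s i (ρ' i) θ') * θ') := by
        simp only [Finset.sum_sub_distrib, Finset.sum_add_distrib,
          Finset.sum_neg_distrib, Finset.mul_sum, sub_mul, Finset.sum_mul]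
    _ = ∑ i, ((1 / 2) * (ρ i * ‖v i - v' i‖ ^ 2)
          + (f i (ρ i) θ - f i (ρ' i) θ'
              - deriv (fun a => f i a θ') (ρ' i) * (ρ i - ρ' i)
              - deriv (fun b => f i (ρ' i) b) θ' * (θ - θ'))
          + (s i (ρ i) θ - s i (ρ' i) θ') * (θ - θ')) :=
        Finset.sum_congr rfl fun i _ => key i
    _ = _ := by
        simp only [Finset.sum_sub_distrib, Finset.sum_add_distrib,
          Finset.sum_neg_distrib, Finset.mul_sum, sub_mul, Finset.sum_mul]
end

section
/- Let n ≥ 1, let b_{ij} = b_{ji} ∈ ℝ (1 ≤ i, j ≤ n), let θ, θ̄ ∈ ℝ, ρ_1,…,ρ_n, ρ̄_1,…,ρ̄_n ∈ ℝ, and v_1,…,v_n, v̄_1,…,v̄_n ∈ ℝ³. Then the following identity holds: Σ_{i,j} θ b_{ij} ρ_i ρ_j (v_i − v_j)·v̄_i − Σ_{i,j} θ̄ b_{ij} ρ̄_i ρ̄_j (v̄_i − v̄_j)·v̄_i − ½ Σ_{i,j} θ̄ b_{ij} ρ_i ρ_j |v_i − v_j|² + ½ Σ_{i,j} θ̄ b_{ij}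 ρ̄_i ρ̄_j |v̄_i − v̄_j|² + Σ_{i,j} θ̄ b_{ij} ρ_i ρ̄_j (v_i − v̄_i)·(v̄_i − v̄_j) − ½ Σ_{i,j} b_{ij} ρ̄_i ρ̄_j |v̄_i − v̄_j|² (θ − θ̄) = −½ Σ_{i,j} θ̄ b_{ij} ρ_i ρ_j |(v_i − v_j) − (v̄_i − v̄_j)|² − Σ_{i,j} θ̄ b_{ij} ρ_i (ρ_j − ρ̄_j)(v_i − v̄_i)·(v̄_i − v̄_j) + Σ_{i,j} (θ − θ̄) b_{ij} ρ_i ρ_j (v_i − v̄_i)·(v̄_i − v̄_j) + Σ_{i,j} (θ − θ̄) b_{ij} (ρ_i − ρ̄_i) ρ̄_j (v̄_i − v̄_j)·v̄_i + Σ_{i,j} (θ − θ̄) b_{ij} ρ_i (ρ_j − ρ̄_j)(v̄_i − v̄_j)·v̄_i, where all sums run over i, j ∈ {1,…,n}. -/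
open scoped RealInnerProductSpace

/-!
Pointwise algebraic identity by which the friction terms of the relative entropy
computation are reorganized into the friction dissipation
`-½ ∑_{i,j} θ̄ b_{ij} ρ_i ρ_j |(v_i - v_j) - (v̄_i - v̄_j)|²`
plus four friction error terms.
-/

theorem friction_terms_identity
    (n : ℕ) (hn : 1 ≤ n)
    (b : Fin n → Fin n → ℝ)
    (hbsymm : ∀ i j, b i j = b j i)
    (θ θ' : ℝ)
    (ρ ρ' : Fin n → ℝ)
    (v v' : Fin n → EuclideanSpace ℝ (Fin 3)) :
    (∑ i, ∑ j, θ * b i j * ρ i * ρ j * ⟪v i - v j, v' i⟫)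
      - (∑ i, ∑ j, θ' * b i j * ρ' i * ρ' j * ⟪v' i - v' j, v' i⟫)
      - (1 / 2) * (∑ i, ∑ j, θ' * b i j * ρ i * ρ j * ‖v i - v j‖ ^ 2)
      + (1 / 2) * (∑ i, ∑ j, θ' * b i j * ρ' i * ρ' j * ‖v' i - v' j‖ ^ 2)
      + (∑ i, ∑ j, θ' * b i j * ρ i * ρ' j * ⟪v i - v' i, v' i - v' j⟫)
      - (1 / 2) * (∑ i, ∑ j, b i j * ρ' i * ρ' j * ‖v' i - v' j‖ ^ 2 * (θ - θ'))
    = -(1 / 2) * (∑ i, ∑ j, θ' * b i j * ρ i * ρ j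
          * ‖(v i - v j) - (v' i - v' j)‖ ^ 2)
      - (∑ i, ∑ j, θ' * b i j * ρ i * (ρ j - ρ' j) * ⟪v i - v' i, v' i - v' j⟫)
      + (∑ i, ∑ j, (θ - θ') * b i j * ρ i * ρ j * ⟪v i - v' i, v' i - v' j⟫)
      + (∑ i, ∑ j, (θ - θ') * b i j * (ρ i - ρ' i) * ρ' j * ⟪v' i - v' j, v' i⟫)
      + (∑ i, ∑ j, (θ - θ') * b i j * ρ i * (ρ j - ρ' j) * ⟪v' i - v' j, v' i⟫) := by
  have key : ∀ (f : Fin n → Fin n → ℝ), (∀ i j, f i j + f j i = 0) →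
      (∑ i, ∑ j, f i j) = 0 := by
    intro f hf
    have h1 : (∑ i, ∑ j, f i j) = ∑ i, ∑ j, f j i := Finset.sum_comm ..
    have h2 : (∑ i, ∑ j, (f i j + f j i)) = 0 := by
      simp [hf]
    have h3 : (∑ i, ∑ j, (f i j + f j i))
        = (∑ i, ∑ j, f i j) + (∑ i, ∑ j, f j i) := by
      simp [Finset.sum_add_distrib]
    rw [h3, ← h1] at h2
    linarith
  rw [← sub_eq_zero]
  have expand :
      (∑ i, ∑ j, θ * b i j * ρ i * ρ j * ⟪v i - v j, v' i⟫)
      - (∑ i, ∑ j, θ' * b i j * ρ' i * ρ' j * ⟪v' i - v' j, v' i⟫)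
      - (1 / 2) * (∑ i, ∑ j, θ' * b i j * ρ i * ρ j * ‖v i - v j‖ ^ 2)
      + (1 / 2) * (∑ i, ∑ j, θ' * b i j * ρ' i * ρ' j * ‖v' i - v' j‖ ^ 2)
      + (∑ i, ∑ j, θ' * b i j * ρ i * ρ' j * ⟪v i - v' i, v' i - v' j⟫)
      - (1 / 2) * (∑ i, ∑ j, b i j * ρ' i * ρ' j * ‖v' i - v' j‖ ^ 2 * (θ - θ'))
      - (-(1 / 2) * (∑ i, ∑ j, θ' * b i j * ρ i * ρ j
          * ‖(v i - v j) - (v' i - v' j)‖ ^ 2)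
      - (∑ i, ∑ j, θ' * b i j * ρ i * (ρ j - ρ' j) * ⟪v i - v' i, v' i - v' j⟫)
      + (∑ i, ∑ j, (θ - θ') * b i j * ρ i * ρ j * ⟪v i - v' i, v' i - v' j⟫)
      + (∑ i, ∑ j, (θ - θ') * b i j * (ρ i - ρ' i) * ρ' j * ⟪v' i - v' j, v' i⟫)
      + (∑ i, ∑ j, (θ - θ') * b i j * ρ i * (ρ j - ρ' j) * ⟪v' i - v' j, v' i⟫))
      = ∑ i, ∑ j,
        (θ * b i j * ρ i * ρ j * ⟪v i - v j, v' i⟫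
        - θ' * b i j * ρ' i * ρ' j * ⟪v' i - v' j, v' i⟫
        - (1 / 2) * (θ' * b i j * ρ i * ρ j * ‖v i - v j‖ ^ 2)
        + (1 / 2) * (θ' * b i j * ρ' i * ρ' j * ‖v' i - v' j‖ ^ 2)
        + θ' * b i j * ρ i * ρ' j * ⟪v i - v' i, v' i - v' j⟫
        - (1 / 2) * (b i j * ρ' i * ρ' j * ‖v' i - v' j‖ ^ 2 * (θ - θ'))
        - (-(1 / 2) * (θ' * b i j * ρ i * ρ j
            * ‖(v i - v j) - (v' i - v' j)‖ ^ 2)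
          - θ' * b i j * ρ i * (ρ j - ρ' j) * ⟪v i - v' i, v' i - v' j⟫
          + (θ - θ') * b i j * ρ i * ρ j * ⟪v i - v' i, v' i - v' j⟫
          + (θ - θ') * b i j * (ρ i - ρ' i) * ρ' j * ⟪v' i - v' j, v' i⟫
          + (θ - θ') * b i j * ρ i * (ρ j - ρ' j) * ⟪v' i - v' j, v' i⟫)) := by
    simp only [Finset.mul_sum, ← Finset.sum_sub_distrib, ← Finset.sum_add_distrib,
      Finset.sum_neg_distrib]
  rw [expand]
  apply key
  intro i j
  rw [hbsymm j i]
  simp only [← real_inner_self_eq_norm_sq]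
  simp only [inner_sub_left, inner_sub_right]
  rw [real_inner_comm (v j) (v i), real_inner_comm (v' i) (v i),
    real_inner_comm (v' j) (v i), real_inner_comm (v' i) (v j),
    real_inner_comm (v' j) (v j), real_inner_comm (v' j) (v' i)]
  ring
end
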